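/- Suppose ρ is irregular, witnessed by menus A, B ∈ 𝒜 with A ⊆ B and an alternative a ∈ A such that ρ_B(a) > ρ_A(a). Then for every set-monotone and stable RAUM representation π of ρ with marginal π*, and for every strict linear order ≻ ∈ U under which a is the worst element of X (i.e., b ≻ a for all b ∈ X\{a}), one has π*(≻) < 1. In particular, the identified set of marginal preference distributions consistent with ρ is a strict subset of Δ(U). -/

import Mathlib

open Finset

/-- A strict linear order on `X`, encoded as a Boolean relation. -/
def IsPref {X : Type*} (r : X → X → Bool) : Prop :=
  (∀ a, ¬ r a a) ∧ (∀ a b c, r a b → r b c → r a c) ∧ (∀ a b, a ≠ b → (r a b ∨ r b a))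

instance {X : Type*} [Fintype X] [DecidableEq X] : DecidablePred (IsPref (X := X)) :=
  fun r => by unfold IsPref; infer_instance

/-- The set `U` of strict linear orders (preferences) on `X`. -/
abbrev Pref (X : Type*) [Fintype X] [DecidableEq X] := {r : X → X → Bool // IsPref r}

/-- The set `Φ` of consideration filters, indexed by nonempty consideration sets `D ⊆ X`. -/
abbrev Filt (X : Type*) := {D : Finset X // D.Nonempty}

/-- The filter `φ_D` applied to a menu `A`: it returns `D` if `D ⊆ A`, and `∅` otherwise. -/
def fapp {X : Type*} [DecidableEq X] (φ : Filt X) (A : Finset X) : Finset X :=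
  if φ.1 ⊆ A then φ.1 else ∅

/-- `a` is considered and is the `r`-best alternative in `S`. -/
def wins {X : Type*} [DecidableEq X] (r : X → X → Bool) (a : X) (S : Finset X) : Prop :=
  a ∈ S ∧ ∀ b ∈ S.erase a, r a b

instance {X : Type*} [DecidableEq X] (r : X → X → Bool) (a : X) (S : Finset X) :
    Decidable (wins r a S) := by unfold wins; infer_instance

/-- A RAUM rule: for every menu (nonempty `A ⊆ X`), a probability distribution on `U × Φ`
that puts no mass on filters that are infeasible at `A`. -/
structure RAUM (X : Type*) [Fintype X] [DecidableEq X] where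
  p : Finset X → Pref X → Filt X → ℝ
  nonneg : ∀ A : Finset X, A.Nonempty → ∀ pr φ, 0 ≤ p A pr φ
  sum_one : ∀ A : Finset X, A.Nonempty → ∑ pr : Pref X, ∑ φ : Filt X, p A pr φ = 1
  feas : ∀ A : Finset X, A.Nonempty → ∀ pr φ, fapp φ A = ∅ → p A pr φ = 0

/-- A stochastic choice data set on the collection of menus `𝒜`. -/
def IsSCD {X : Type*} [DecidableEq X] (𝒜 : Finset (Finset X)) (ρ : Finset X → X → ℝ) : Prop :=
  𝒜.Nonempty ∧ (∀ A ∈ 𝒜, A.Nonempty) ∧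
    ∀ A ∈ 𝒜, (∀ a ∈ A, 0 ≤ ρ A a) ∧ ∑ a ∈ A, ρ A a = 1

/-- `ρ` admits the RAUM representation `π`. -/
def Represents {X : Type*} [Fintype X] [DecidableEq X] (ρ : Finset X → X → ℝ)
    (𝒜 : Finset (Finset X)) (π : RAUM X) : Prop :=
  ∀ A ∈ 𝒜, ∀ a ∈ A,
    ρ A a = ∑ pr : Pref X, ∑ φ : Filt X,
      π.p A pr φ * (if wins pr.1 a (fapp φ A) then (1 : ℝ) else 0)

/-- `π` is stable with marginal preference distribution `pstar`. -/
def Stable {X : Type*} [Fintype X] [DecidableEq X] (π : RAUM X) (pstar : Pref X → ℝ) : Prop :=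
  (∀ pr, 0 ≤ pstar pr) ∧ (∑ pr : Pref X, pstar pr = 1) ∧
    ∀ A : Finset X, A.Nonempty → ∀ pr, ∑ φ : Filt X, π.p A pr φ = pstar pr

/-- `π` is set-monotone. -/
def SetMonotone {X : Type*} [Fintype X] [DecidableEq X] (π : RAUM X) : Prop :=
  ∃ lam : Finset X → Pref X → Filt X → ℝ,
    (∀ A : Finset X, A.Nonempty → ∀ pr,
      (∀ φ, 0 ≤ lam A pr φ) ∧ (∑ φ : Filt X, lam A pr φ = 1)) ∧
    (∀ A : Finset X, A.Nonempty → ∀ pr φ, fapp φ A = ∅ → lam A pr φ = 0) ∧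
    (∀ A B : Finset X, A.Nonempty → A ⊆ B → ∀ pr φ, fapp φ A ≠ ∅ → lam B pr φ ≤ lam A pr φ) ∧
    (∀ A : Finset X, A.Nonempty → ∀ pr φ, π.p A pr φ = lam A pr φ * ∑ φ' : Filt X, π.p A pr φ')

/-- Proposition 2: If `ρ` is irregular, witnessed by menus `A ⊆ B` in `𝒜` and
`a ∈ A` with `ρ_B(a) > ρ_A(a)`, then for every set-monotone and stable RAUM representation
`π` of `ρ` with marginal `pstar` and every preference order under which `a` is the worst
element of `X`, the marginal probability of that order is strictly less than one. -/
theorem stmt5 {X : Type*} [Fintype X] [DecidableEq X]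
    (𝒜 : Finset (Finset X)) (ρ : Finset X → X → ℝ) (hSCD : IsSCD 𝒜 ρ)
    (A B : Finset X) (hA : A ∈ 𝒜) (hB : B ∈ 𝒜) (hAB : A ⊆ B)
    (a : X) (ha : a ∈ A) (hirr : ρ A a < ρ B a)
    (π : RAUM X) (pstar : Pref X → ℝ)
    (hst : Stable π pstar) (hmon : SetMonotone π) (hrep : Represents ρ 𝒜 π)
    (pr : Pref X) (hworst : ∀ b : X, b ≠ a → pr.1 b a) :
    pstar pr < 1 := by
  by_contra h
  push_neg at h
  obtain ⟨hps0, hps1, hpsA⟩ := hst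
  have hA_ne : A.Nonempty := ⟨a, ha⟩
  have hB_ne : B.Nonempty := hA_ne.mono hAB
  have haB : a ∈ B := hAB ha
  have hle : pstar pr ≤ 1 := by
    rw [← hps1]
    exact Finset.single_le_sum (fun i _ => hps0 i) (Finset.mem_univ pr)
  have hpr1 : pstar pr = 1 := le_antisymm hle h
  have hothers : ∀ pr' : Pref X, pr' ≠ pr → pstar pr' = 0 := by
    intro pr' hne
    by_contra h0
    have hpos : 0 < pstar pr' := lt_of_le_of_ne (hps0 pr') (Ne.symm h0)
    have : pstar pr + pstar pr' ≤ ∑ q : Pref X, pstar q := by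
      rw [← Finset.add_sum_erase _ pstar (Finset.mem_univ pr)]
      exact add_le_add_right (Finset.single_le_sum (fun i _ => hps0 i)
        (Finset.mem_erase.2 ⟨hne, Finset.mem_univ pr'⟩)) _
    rw [hps1, hpr1] at this
    linarith
  have hpzero : ∀ C : Finset X, C.Nonempty → ∀ pr' : Pref X, pr' ≠ pr → ∀ φ : Filt X,
      π.p C pr' φ = 0 := by
    intro C hC pr' hne φ
    have hsum : ∑ φ' : Filt X, π.p C pr' φ' = 0 := by
      rw [hpsA C hC pr', hothers pr' hne]
    have := (Finset.sum_eq_zero_iff_of_nonneg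
      (fun i _ => π.nonneg C hC pr' i)).1 hsum
    exact this φ (Finset.mem_univ φ)
  obtain ⟨hirrfl, htrans, _⟩ := pr.2
  have hasym : ∀ b c : X, pr.1 b c → pr.1 c b → False := by
    intro b c h1 h2
    exact hirrfl b (htrans b c b h1 h2)
  have haX : ({a} : Finset X).Nonempty := Finset.singleton_nonempty a
  set φa : Filt X := ⟨{a}, haX⟩ with hφa
  have hfappA : fapp φa A = {a} := by
    simp [fapp, hφa, Finset.singleton_subset_iff, ha]
  have hfappB : fapp φa B = {a} := by
    simp [fapp, hφa, Finset.singleton_subset_iff, haB]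
  have hwinsφa : ∀ C : Finset X, a ∈ C → wins pr.1 a (fapp φa C) := by
    intro C haC
    have : fapp φa C = {a} := by simp [fapp, hφa, Finset.singleton_subset_iff, haC]
    rw [this]
    refine ⟨Finset.mem_singleton_self a, ?_⟩
    intro b hb
    simp at hb
  have key : ∀ C : Finset X, C ∈ 𝒜 → a ∈ C → ρ C a = π.p C pr φa := by
    intro C hC haC
    have hC_ne : C.Nonempty := ⟨a, haC⟩
    rw [hrep C hC a haC]
    rw [Finset.sum_eq_single pr]
    · rw [Finset.sum_eq_single φa]
      · rw [if_pos (hwinsφa C haC), mul_one]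
      · intro φ _ hφne
        by_cases hw : wins pr.1 a (fapp φ C)
        · exfalso
          obtain ⟨hmem, hbest⟩ := hw
          by_cases hsub : φ.1 ⊆ C
          · have hfeq : fapp φ C = φ.1 := by simp [fapp, hsub]
            rw [hfeq] at hmem hbest
            have hsing : φ.1 = {a} := by
              apply Finset.eq_singleton_iff_unique_mem.2
              refine ⟨hmem, ?_⟩
              intro b hb
              by_contra hbne
              have h1 : pr.1 a b := by
                have := hbest b (Finset.mem_erase.2 ⟨hbne, hb⟩)
                simpa using this
              exact hasym a b h1 (hworst b hbne)
            exact hφne (Subtype.ext hsing)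
          · have : fapp φ C = ∅ := by simp [fapp, hsub]
            rw [this] at hmem
            simp at hmem
        · rw [if_neg hw, mul_zero]
      · intro hφ; exact absurd (Finset.mem_univ φa) hφ
    · intro pr' _ hne
      apply Finset.sum_eq_zero
      intro φ _
      rw [hpzero C hC_ne pr' hne φ, zero_mul]
    · intro hpr; exact absurd (Finset.mem_univ pr) hpr
  obtain ⟨lam, hlam1, hlam0, hlamMono, hlamEq⟩ := hmon
  have hsumC : ∀ C : Finset X, C.Nonempty → ∑ φ' : Filt X, π.p C pr φ' = 1 := by
    intro C hC; rw [hpsA C hC pr, hpr1]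
  have hρA : ρ A a = lam A pr φa := by
    rw [key A hA ha, hlamEq A hA_ne pr φa, hsumC A hA_ne, mul_one]
  have hρB : ρ B a = lam B pr φa := by
    rw [key B hB haB, hlamEq B hB_ne pr φa, hsumC B hB_ne, mul_one]
  have hmono : lam B pr φa ≤ lam A pr φa := by
    apply hlamMono A B hA_ne hAB pr φa
    rw [hfappA]
    simp
  rw [hρA, hρB] at hirr
  linarith
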